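/- arXiv:2310.08894 — 2 statements merged into one kernel-verified Lean document; each statement's English description precedes it below -/
import Mathlib

section
/- Define the F × K array C with F = K, entries star exactly at positions C[j][k] = star for j ∈ [⟨(k-1)t+1⟩_K, ⟨kt⟩_K] (a cyclic interval of length t). If rt < K, then C is a (K, K, t, r) caching array: each column has exactly t stars, and any two columns at cyclic distance less than r have disjoint star supports. -/
/-- The representative of `a` mod `K` in `{1, ..., K}`. -/
def cyc (K : ℕ) (a : ℤ) : ℤ := (a - 1) % (K : ℤ) + 1

/-- `C[j][k] = star` iff `j` lies in the cyclic interval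
`[⟨(k-1)t+1⟩_K, ⟨kt⟩_K]` of length `t`. -/
def star5 (K t : ℕ) (j k : ℤ) : Prop :=
  ∃ i : ℕ, i < t ∧ j = cyc K ((k - 1) * t + 1 + i)

lemma cyc_bounds (K : ℕ) (hK : 0 < K) (a : ℤ) : 1 ≤ cyc K a ∧ cyc K a ≤ K := by
  unfold cyc
  have h1 := Int.emod_nonneg (a - 1) (by exact_mod_cast hK.ne' : (K : ℤ) ≠ 0)
  have h2 := Int.emod_lt_of_pos (a - 1) (by exact_mod_cast hK : (0 : ℤ) < K)
  omega

lemma cyc_dvd (K : ℕ) (hK : 0 < K) {a b : ℤ} (hab : cyc K a = cyc K b) :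
    (K : ℤ) ∣ a - b := by
  unfold cyc at hab
  have h : (a - 1) % (K : ℤ) = (b - 1) % (K : ℤ) := by omega
  have := Int.emod_eq_emod_iff_emod_sub_eq_zero.mp h
  have h2 : (K : ℤ) ∣ (a - 1 - (b - 1)) := Int.dvd_of_emod_eq_zero this
  have : a - 1 - (b - 1) = a - b := by ring
  rwa [this] at h2

lemma cyc_self (K : ℕ) {a : ℤ} : (K : ℤ) ∣ a - cyc K a := by
  unfold cyc
  have := Int.emod_emod_of_dvd (a - 1) (dvd_refl (K : ℤ))
  have h : (K : ℤ) ∣ (a - 1) - (a - 1) % K := Int.dvd_self_sub_of_emod_eq rfl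
  have he : a - ((a - 1) % (K : ℤ) + 1) = (a - 1) - (a - 1) % K := by ring
  rwa [he]

theorem stmt5 (K t r : ℕ) (hK : 0 < K) (ht : 0 < t) (hr : 0 < r) (h : r * t < K) :
    -- each column has exactly t stars
    (∀ k ∈ Set.Icc (1 : ℤ) K,
      {j ∈ Set.Icc (1 : ℤ) K | star5 K t j k}.ncard = t) ∧
    -- columns at cyclic distance less than r have disjoint star supports
    (∀ k₁ ∈ Set.Icc (1 : ℤ) K, ∀ k₂ ∈ Set.Icc (1 : ℤ) K, k₁ ≠ k₂ →
      (cyc K (k₁ - k₂) < r ∨ cyc K (k₂ - k₁) < r) →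
      ∀ j, ¬(star5 K t j k₁ ∧ star5 K t j k₂)) := by
  have htK : t < K := lt_of_le_of_lt (Nat.le_mul_of_pos_left t hr) h
  -- key lemma for disjointness
  have key : ∀ d m : ℤ, 1 ≤ d → d < r → -t < m → m < t → ¬ (K : ℤ) ∣ d * t + m := by
    intro d m hd hdr hm1 hm2 hdvd
    have hK' : (0 : ℤ) < (K : ℤ) := by exact_mod_cast hK
    have hrt : (r : ℤ) * t < K := by exact_mod_cast h
    have ht' : (0 : ℤ) < (t : ℤ) := by exact_mod_cast ht
    have hpos : (0 : ℤ) < d * t + m := by nlinarith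
    have hlt : d * t + m < K := by nlinarith
    have := Int.le_of_dvd hpos hdvd
    omega
  constructor
  · intro k hk
    have hset : {j ∈ Set.Icc (1 : ℤ) K | star5 K t j k}
        = (fun i : ℕ => cyc K ((k - 1) * t + 1 + i)) '' ↑(Finset.range t) := by
      ext j
      simp only [Set.mem_setOf_eq, Set.mem_image, Finset.coe_range, Set.mem_Iio,
        Set.mem_Icc, star5]
      constructor
      · rintro ⟨_, i, hi, rfl⟩; exact ⟨i, hi, rfl⟩
      · rintro ⟨i, hi, rfl⟩
        exact ⟨(cyc_bounds K hK _), i, hi, rfl⟩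
    rw [hset, Set.ncard_image_of_injOn, Set.ncard_coe_finset, Finset.card_range]
    intro i₁ h₁ i₂ h₂ heq
    simp only [Finset.coe_range, Set.mem_Iio] at h₁ h₂
    have hd := cyc_dvd K hK heq
    have he : ((k - 1) * t + 1 + i₁) - ((k - 1) * t + 1 + i₂) = (i₁ : ℤ) - i₂ := by ring
    rw [he] at hd
    rcases hd with ⟨c, hc⟩
    have hc0 : c = 0 := by nlinarith [Int.ofNat_lt.mpr htK]
    rw [hc0, mul_zero] at hc
    have : (i₁ : ℤ) = i₂ := by omega
    exact_mod_cast this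
  · rintro k₁ hk₁ k₂ hk₂ hne hdist j ⟨⟨i₁, hi₁, rfl⟩, i₂, hi₂, hj⟩
    have hd := cyc_dvd K hK hj
    have he : ((k₁ - 1) * t + 1 + i₁) - ((k₂ - 1) * t + 1 + i₂)
        = (k₁ - k₂) * t + ((i₁ : ℤ) - i₂) := by ring
    rw [he] at hd
    simp only [Set.mem_Icc] at hk₁ hk₂
    have hndvd : ¬ (K : ℤ) ∣ (k₁ - k₂) := by
      rintro ⟨c, hc⟩
      have hc0 : c = 0 := by nlinarith
      rw [hc0, mul_zero] at hc
      apply hne; omega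
    rcases hdist with hlt | hlt
    · set d := cyc K (k₁ - k₂) with hdd
      have hb := cyc_bounds K hK (k₁ - k₂)
      have hs := cyc_self K (a := k₁ - k₂)
      have hd1 : 1 ≤ d := hb.1
      -- K ∣ d * t + (i₁ - i₂)
      have hdvd2 : (K : ℤ) ∣ d * t + ((i₁ : ℤ) - i₂) := by
        have h3 : (K : ℤ) ∣ ((k₁ - k₂) - d) * t := Dvd.dvd.mul_right hs _
        have h4 := dvd_sub hd h3
        have he2 : (k₁ - k₂) * t + ((i₁ : ℤ) - i₂) - ((k₁ - k₂) - d) * t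
            = d * t + ((i₁ : ℤ) - i₂) := by ring
        rwa [he2] at h4
      exact key d _ hd1 hlt (by omega) (by omega) hdvd2
    · set d := cyc K (k₂ - k₁) with hdd
      have hb := cyc_bounds K hK (k₂ - k₁)
      have hs := cyc_self K (a := k₂ - k₁)
      have hd1 : 1 ≤ d := hb.1
      have hdvd2 : (K : ℤ) ∣ d * t + ((i₂ : ℤ) - i₁) := by
        have hd' : (K : ℤ) ∣ (k₂ - k₁) * t + ((i₂ : ℤ) - i₁) := by
          have := dvd_neg.mpr hd
          have he2 : -((k₁ - k₂) * t + ((i₁ : ℤ) - i₂)) = (k₂ - k₁) * t + ((i₂ : ℤ) - i₁) := by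
            ring
          rwa [he2] at this
        have h3 : (K : ℤ) ∣ ((k₂ - k₁) - d) * t := Dvd.dvd.mul_right hs _
        have h4 := dvd_sub hd' h3
        have he2 : (k₂ - k₁) * t + ((i₂ : ℤ) - i₁) - ((k₂ - k₁) - d) * t
            = d * t + ((i₂ : ℤ) - i₁) := by ring
        rwa [he2] at h4
      exact key d _ hd1 hlt (by omega) (by omega) hdvd2
end

section
/- Let C' be an F' × K array over {star, null}, and let C'_i (i ∈ [r-1]) be obtained from C' by cyclically shifting the columns of C' by i positions to the right. Suppose C' has stars only in columns that are multiples of r (columns r, 2r, ..., K where K = rK'), each such column having Z' stars. Then the vertical concatenation C = [C'; C'_1; ...; C'_{r-1}] is an rF' × K array in which each column contains exactly Z' stars, and any two columns at cyclic distance less than r have disjoint star supports; i.e., C is a (K, rF', Z', r) caching array. -/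
/-- The star predicate of the vertical concatenation `C = [C'; C'_1; ...; C'_{r-1}]`,
where `C'_i` cyclically shifts the columns of `C'` by `i` positions to the right:
row `j ∈ [rF']` decomposes as `j = i·F' + j₀` with `i ∈ [0,r-1]`, `j₀ ∈ [1,F']`,
and the cell `(j,k)` is a star iff `C'[j₀][⟨k-i⟩_K]` is. -/
def starC (K F' r : ℕ) (star' : ℤ → ℤ → Prop) (j k : ℤ) : Prop :=
  ∃ i : ℕ, i < r ∧ ∃ j₀ : ℤ, 1 ≤ j₀ ∧ j₀ ≤ F' ∧ j = (i : ℤ) * F' + j₀ ∧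
    star' j₀ (cyc K (k - i))

lemma cyc_mem {K : ℕ} (hK : 0 < K) (a : ℤ) : 1 ≤ cyc K a ∧ cyc K a ≤ (K : ℤ) := by
  unfold cyc
  have hK' : (0:ℤ) < (K:ℤ) := by exact_mod_cast hK
  have h1 := Int.emod_nonneg (a - 1) hK'.ne'
  have h2 := Int.emod_lt_of_pos (a - 1) hK'
  omega

lemma cyc_sub_dvd (K : ℕ) (a : ℤ) : (K : ℤ) ∣ cyc K a - a := by
  refine ⟨-((a - 1) / K), ?_⟩
  have := Int.emod_def (a - 1) (K : ℤ)
  unfold cyc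
  linarith [this]

lemma stmt15_divHelper {F' : ℕ} (hF' : 0 < F') (i : ℕ) (j₀ : ℤ) (h1 : 1 ≤ j₀) (h2 : j₀ ≤ F') :
    ((i : ℤ) * F' + j₀ - 1) / (F' : ℤ) = i := by
  have hF : (0:ℤ) < (F':ℤ) := by exact_mod_cast hF'
  rw [show (i : ℤ) * F' + j₀ - 1 = (j₀ - 1) + (i : ℤ) * (F' : ℤ) by ring,
    Int.add_mul_ediv_right _ _ hF.ne',
    Int.ediv_eq_zero_of_lt (by omega) (by omega)]
  simp

theorem stmt15 (K' F' Z' r : ℕ) (hr : 0 < r) (hK' : 0 < K') (hF' : 0 < F')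
    (star' : ℤ → ℤ → Prop)
    -- C' is an F' × K array, K = rK'
    (hin : ∀ j k, star' j k →
      j ∈ Set.Icc (1 : ℤ) F' ∧ k ∈ Set.Icc (1 : ℤ) ((r * K' : ℕ) : ℤ))
    -- stars only in columns that are multiples of r
    (hmult : ∀ j k, star' j k → (r : ℤ) ∣ k)
    -- each such column has exactly Z' stars
    (hcol : ∀ k ∈ Set.Icc (1 : ℤ) ((r * K' : ℕ) : ℤ), (r : ℤ) ∣ k →
      {j ∈ Set.Icc (1 : ℤ) F' | star' j k}.ncard = Z') :
    -- each column of C contains exactly Z' stars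
    (∀ k ∈ Set.Icc (1 : ℤ) ((r * K' : ℕ) : ℤ),
      {j ∈ Set.Icc (1 : ℤ) ((r * F' : ℕ) : ℤ) |
        starC (r * K') F' r star' j k}.ncard = Z') ∧
    -- columns at cyclic distance less than r have disjoint star supports
    (∀ k₁ ∈ Set.Icc (1 : ℤ) ((r * K' : ℕ) : ℤ),
      ∀ k₂ ∈ Set.Icc (1 : ℤ) ((r * K' : ℕ) : ℤ), k₁ ≠ k₂ →
      (cyc (r * K') (k₁ - k₂) < r ∨ cyc (r * K') (k₂ - k₁) < r) →
      ∀ j, ¬(starC (r * K') F' r star' j k₁ ∧ starC (r * K') F' r star' j k₂)) := by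
  have hKpos : 0 < r * K' := Nat.mul_pos hr hK'
  have hrpos : (0:ℤ) < (r:ℤ) := by exact_mod_cast hr
  have hrK : (r : ℤ) ∣ ((r * K' : ℕ) : ℤ) := ⟨K', by push_cast; ring⟩
  have hcycmod : ∀ a : ℤ, (r : ℤ) ∣ cyc (r * K') a - a :=
    fun a => dvd_trans hrK (cyc_sub_dvd (r * K') a)
  -- the shift index is determined mod r
  have key : ∀ k : ℤ, ∀ i : ℕ, i < r → ∀ j₀ : ℤ, star' j₀ (cyc (r * K') (k - i)) →
      (i : ℤ) = k % r := by
    intro k i hi j₀ hst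
    have hdc : (r : ℤ) ∣ cyc (r * K') (k - i) := hmult _ _ hst
    have hki : (r : ℤ) ∣ k - i := by
      have h := hcycmod (k - i)
      have := dvd_sub hdc h
      simpa using this
    obtain ⟨q, hq⟩ := hki
    have hk : k = (i : ℤ) + (r : ℤ) * q := by linarith
    rw [hk, Int.add_mul_emod_self_left,
      Int.emod_eq_of_lt (by exact_mod_cast Nat.zero_le i) (by exact_mod_cast hi)]
  constructor
  · intro k hk
    set i : ℕ := (k % r).toNat with hi_def
    have hknn : 0 ≤ k % r := Int.emod_nonneg k hrpos.ne'
    have hicast : (i : ℤ) = k % r := Int.toNat_of_nonneg hknn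
    have hir : i < r := by
      have := Int.emod_lt_of_pos k hrpos
      omega
    have hcdvd : (r : ℤ) ∣ cyc (r * K') (k - i) := by
      have h1 : (r : ℤ) ∣ k - i := by
        rw [hicast]
        exact ⟨k / r, by rw [Int.emod_def]; ring⟩
      have h2 := hcycmod (k - i)
      have := dvd_add h2 h1
      simpa using this
    have hcmem : cyc (r * K') (k - i) ∈ Set.Icc (1 : ℤ) ((r * K' : ℕ) : ℤ) := by
      have := cyc_mem hKpos (k - i)
      exact Set.mem_Icc.mpr this
    have himg : {j ∈ Set.Icc (1 : ℤ) ((r * F' : ℕ) : ℤ) | starC (r * K') F' r star' j k}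
        = (fun j₀ => (i : ℤ) * F' + j₀) ''
          {j₀ ∈ Set.Icc (1 : ℤ) F' | star' j₀ (cyc (r * K') (k - i))} := by
      ext j
      simp only [Set.mem_setOf_eq, Set.mem_image, Set.mem_Icc, starC]
      constructor
      · rintro ⟨hjb, i', hi', j₀, hj1, hj2, hjeq, hst⟩
        have h := key k i' hi' j₀ hst
        have hii : i' = i := by omega
        subst hii
        exact ⟨j₀, ⟨⟨hj1, hj2⟩, hst⟩, hjeq.symm⟩
      · rintro ⟨j₀, ⟨⟨hj1, hj2⟩, hst⟩, rfl⟩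
        have h0 : (0:ℤ) ≤ (i : ℤ) * F' := by positivity
        have h1 : ((i : ℤ) + 1) * (F' : ℤ) ≤ (r : ℤ) * (F' : ℤ) := by
          have : (i : ℤ) + 1 ≤ (r : ℤ) := by exact_mod_cast hir
          exact mul_le_mul_of_nonneg_right this (by positivity)
        refine ⟨⟨by linarith, ?_⟩, i, hir, j₀, hj1, hj2, rfl, hst⟩
        push_cast
        linarith
    rw [himg, Set.ncard_image_of_injective _ (add_right_injective _)]
    exact hcol _ hcmem hcdvd
  · rintro k₁ hk₁ k₂ hk₂ hne hdist j ⟨⟨i₁, hi₁, j₁, ha1, ha2, he1, hs1⟩,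
      ⟨i₂, hi₂, j₂, hb1, hb2, he2, hs2⟩⟩
    have e1 := key k₁ i₁ hi₁ j₁ hs1
    have e2 := key k₂ i₂ hi₂ j₂ hs2
    have hieq : i₁ = i₂ := by
      have d1 : ((i₁ : ℤ) * F' + j₁ - 1) / (F' : ℤ) = i₁ := stmt15_divHelper hF' i₁ j₁ ha1 ha2
      have d2 : ((i₂ : ℤ) * F' + j₂ - 1) / (F' : ℤ) = i₂ := stmt15_divHelper hF' i₂ j₂ hb1 hb2
      rw [← he1] at d1
      rw [← he2] at d2
      have : (i₁ : ℤ) = (i₂ : ℤ) := by rw [← d1, ← d2]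
      exact_mod_cast this
    have hmod : k₁ % (r : ℤ) = k₂ % (r : ℤ) := by
      rw [← e1, ← e2, hieq]
    have hdvd12 : (r : ℤ) ∣ k₁ - k₂ := Int.ModEq.dvd (Int.ModEq.symm hmod)
    have hdvd21 : (r : ℤ) ∣ k₂ - k₁ := Int.ModEq.dvd hmod
    rcases hdist with h | h
    · have hd : (r : ℤ) ∣ cyc (r * K') (k₁ - k₂) := by
        have := dvd_add (hcycmod (k₁ - k₂)) hdvd12
        simpa using this
      have h1 := (cyc_mem hKpos (k₁ - k₂)).1
      have := Int.le_of_dvd (by omega) hd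
      omega
    · have hd : (r : ℤ) ∣ cyc (r * K') (k₂ - k₁) := by
        have := dvd_add (hcycmod (k₂ - k₁)) hdvd21
        simpa using this
      have h1 := (cyc_mem hKpos (k₂ - k₁)).1
      have := Int.le_of_dvd (by omega) hd
      omega
end
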